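/- Let q > 1 be a real number, let a > 0 and b, c be real numbers, set f(x) = −a x² + b x + c, and let t ≤ u be real numbers. Then the sum of q^{f(r)} over all integers r with t ≤ r ≤ u satisfies ∑_{r∈ℤ, t≤r≤u} q^{f(r)} ≤ C(q^a) · q^{f(y)}, where y ∈ [t, u] is a point at which f attains its maximum on [t, u] (in particular, the sum is at most C(q^a) times the supremum of q^{f(x)} over x ∈ [t, u]). -/

import Mathlib

open Real Complex



/-- `C(q) = ∑_{r ∈ ℤ} q^{-r²}`. -/
noncomputable def Cfun (q : ℝ) : ℝ := ∑' r : ℤ, q ^ (-((r : ℝ) ^ 2))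

/-- `D(q) = ∏_{j=1}^∞ (1 - q^{-j})⁻¹`. -/
noncomputable def Dfun (q : ℝ) : ℝ := ∏' j : ℕ, (1 - q ^ (-((j : ℝ) + 1)))⁻¹

/-- The Gaussian coefficient `[n choose k]_q = ∏_{i=0}^{k-1} (q^n - q^i)/(q^k - q^i)`. -/
noncomputable def gaussR (q : ℝ) (n k : ℕ) : ℝ :=
  ∏ i ∈ Finset.range k, ((q ^ n - q ^ i) / (q ^ k - q ^ i))

/-- The Galois number `𝒢_n(q) = ∑_{k=0}^n [n choose k]_q`. -/
noncomputable def galoisR (q : ℝ) (n : ℕ) : ℝ := ∑ k ∈ Finset.range (n + 1), gaussR q n k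

/-- **Lemma (theta-function bound for quadratic sums).**
For real `q > 1`, `f(x) = -a x² + b x + c` with `a > 0`, and `t ≤ u`, the sum of `q^{f(r)}`
over the integers `r ∈ [t, u]` is at most `C(q^a)·q^{f(y)}`, where `y` is any point of
`[t, u]` at which `f` attains its maximum on `[t, u]`. -/
lemma summable_gauss_int (α β : ℝ) (hα : 0 < α) :
    Summable fun n : ℤ => Real.exp (-α * (n:ℝ)^2 + β * (n:ℝ)) := by
  have hπ := Real.pi_pos
  have h := ((summable_jacobiTheta₂_term_iff (⟨0, -β/(2*π)⟩ : ℂ) (⟨0, α/π⟩ : ℂ)).mpr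
    (by simpa using div_pos hα hπ)).norm
  simp_rw [norm_jacobiTheta₂_term] at h
  refine h.congr fun n => ?_
  show Real.exp (-π * (n:ℝ)^2 * ((⟨0, α/π⟩:ℂ)).im - 2*π*(n:ℝ)*((⟨0, -β/(2*π)⟩:ℂ)).im)
      = Real.exp (-α * (n:ℝ)^2 + β * (n:ℝ))
  congr 1
  show -π * (n:ℝ)^2 * (α/π) - 2*π*(n:ℝ)*(-β/(2*π)) = -α * (n:ℝ)^2 + β * (n:ℝ)
  field_simp
  ring

lemma summable_gauss_shift (L : ℝ) (hL : 0 < L) (v : ℝ) :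
    Summable fun n : ℤ => Real.exp (-L * ((n:ℝ) - v)^2) := by
  have h := (summable_gauss_int L (2*L*v) hL).mul_left (Real.exp (-L*v^2))
  refine h.congr fun n => ?_
  rw [← Real.exp_add]; congr 1; ring


lemma theta_shift_le (L : ℝ) (hL : 0 < L) (v : ℝ) :
    (∑' n : ℤ, Real.exp (-L * ((n:ℝ) - v)^2)) ≤ ∑' n : ℤ, Real.exp (-L * ((n:ℝ))^2) := by
  have hπ := Real.pi_pos
  have hπ' : (π:ℂ) ≠ 0 := Complex.ofReal_ne_zero.mpr (ne_of_gt hπ)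
  set a : ℂ := ((L/π : ℝ) : ℂ) with ha_def
  have ha : 0 < a.re := by simpa [ha_def] using div_pos hL hπ
  set G : ℝ := ‖(1:ℂ) / a ^ (1/2 : ℂ)‖ with hG
  set T : ℝ := ∑' n : ℤ, Real.exp (-(π^2/L) * (n:ℝ)^2) with hT
  have hTsum : Summable fun n : ℤ => Real.exp (-(π^2/L) * (n:ℝ)^2) := by
    have := summable_gauss_int (π^2/L) 0 (by positivity)
    refine this.congr fun n => ?_
    norm_num
  have key : ∀ w : ℝ, Real.exp (L*w^2) * (∑' n : ℤ, Real.exp (-L * ((n:ℝ) - w)^2))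
      = G * ‖∑' n : ℤ, Complex.exp (-π/a * ((n:ℂ) + Complex.I * ((L*w/π : ℝ):ℂ))^2)‖ := by
    intro w
    have h := Complex.tsum_exp_neg_quadratic ha ((L*w/π : ℝ) : ℂ)
    have hterm : ∀ n : ℤ, Complex.exp (-π*a*(n:ℂ)^2 + 2*π*((L*w/π : ℝ):ℂ)*(n:ℂ))
        = ((Real.exp (L*w^2) * Real.exp (-L*((n:ℝ)-w)^2) : ℝ) : ℂ) := by
      intro n
      rw [Complex.ofReal_mul, Complex.ofReal_exp, Complex.ofReal_exp, ← Complex.exp_add]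
      congr 1
      push_cast [ha_def]
      field_simp
      ring
    have h2 : ((Real.exp (L*w^2) * (∑' n : ℤ, Real.exp (-L * ((n:ℝ) - w)^2)) : ℝ) : ℂ)
        = (1:ℂ)/a^(1/2 : ℂ) * ∑' n : ℤ,
            Complex.exp (-π/a * ((n:ℂ) + Complex.I * ((L*w/π : ℝ):ℂ))^2) := by
      rw [← h, Complex.ofReal_mul, Complex.ofReal_tsum, ← tsum_mul_left]
      exact tsum_congr fun n => by rw [← Complex.ofReal_mul, ← hterm n]
    have h3 := congrArg norm h2
    rw [Complex.norm_real, norm_mul, norm_mul,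
      Real.norm_of_nonneg (Real.exp_nonneg _),
      Real.norm_of_nonneg (tsum_nonneg fun n : ℤ => Real.exp_nonneg _)] at h3
    exact h3
  have hnorm : ∀ (w : ℝ) (n : ℤ),
      ‖Complex.exp (-π/a * ((n:ℂ) + Complex.I * ((L*w/π:ℝ):ℂ))^2)‖
        = Real.exp (L*w^2) * Real.exp (-(π^2/L) * (n:ℝ)^2) := by
    intro w n
    rw [Complex.norm_exp, ← Real.exp_add]
    congr 1
    have e1 : -π/a * ((n:ℂ) + Complex.I * ((L*w/π:ℝ):ℂ))^2
        = ((L*w^2 + (-(π^2/L)*(n:ℝ)^2) : ℝ) : ℂ)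
          + ((-(π^2/L)*(2*(n:ℝ)*(L*w/π)) : ℝ):ℂ) * Complex.I := by
      have hL' : (L:ℂ) ≠ 0 := Complex.ofReal_ne_zero.mpr (ne_of_gt hL)
      push_cast [ha_def]
      field_simp
      ring_nf
      rw [Complex.I_sq]
      ring
    rw [e1, Complex.add_re, Complex.ofReal_re, Complex.mul_I_re, Complex.ofReal_im]
    ring
  have hRle : ∀ w : ℝ,
      ‖∑' n : ℤ, Complex.exp (-π/a * ((n:ℂ) + Complex.I * ((L*w/π:ℝ):ℂ))^2)‖
        ≤ Real.exp (L*w^2) * T := by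
    intro w
    refine le_trans (norm_tsum_le_tsum_norm ?_) ?_
    · refine (hTsum.mul_left (Real.exp (L*w^2))).congr fun n => (hnorm w n).symm
    · rw [tsum_congr (hnorm w), tsum_mul_left]
  have hS0 : (∑' n : ℤ, Real.exp (-L * ((n:ℝ))^2)) = G * T := by
    have k0 := key 0
    rw [show L*(0:ℝ)^2 = 0 by ring, Real.exp_zero, one_mul] at k0
    simp only [sub_zero] at k0
    rw [k0]
    congr 1
    have hz : ((L*0/π : ℝ):ℂ) = 0 := by norm_num
    have hterm0 : ∀ n : ℤ, Complex.exp (-π/a * ((n:ℂ) + Complex.I * ((L*0/π:ℝ):ℂ))^2)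
        = ((Real.exp (-(π^2/L) * (n:ℝ)^2) : ℝ) : ℂ) := by
      intro n
      rw [hz, Complex.ofReal_exp]
      congr 1
      push_cast [ha_def]
      field_simp
      ring
    rw [tsum_congr hterm0, ← Complex.ofReal_tsum, Complex.norm_real,
      Real.norm_of_nonneg (tsum_nonneg fun n : ℤ => Real.exp_nonneg _)]
  have hGpos : 0 ≤ G := norm_nonneg _
  have final : Real.exp (L*v^2) * (∑' n : ℤ, Real.exp (-L * ((n:ℝ) - v)^2))
      ≤ Real.exp (L*v^2) * (G * T) := by
    rw [key v]
    calc G * ‖∑' n : ℤ, Complex.exp (-π/a * ((n:ℂ) + Complex.I * ((L*v/π:ℝ):ℂ))^2)‖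
        ≤ G * (Real.exp (L*v^2) * T) := mul_le_mul_of_nonneg_left (hRle v) hGpos
      _ = Real.exp (L*v^2) * (G * T) := by ring
  rw [hS0]
  exact le_of_mul_le_mul_left final (Real.exp_pos _)

theorem quadratic_sum_le_theta_bound (q a b c t u y : ℝ) (hq : 1 < q) (ha : 0 < a)
    (htu : t ≤ u) (hy : y ∈ Set.Icc t u)
    (hmax : ∀ z ∈ Set.Icc t u, -a * z ^ 2 + b * z + c ≤ -a * y ^ 2 + b * y + c) :
    ∑ r ∈ Finset.Icc ⌈t⌉ ⌊u⌋, q ^ (-a * (r : ℝ) ^ 2 + b * (r : ℝ) + c) ≤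
      Cfun (q ^ a) * q ^ (-a * y ^ 2 + b * y + c) := by
  have q0 : (0:ℝ) < q := lt_trans zero_lt_one hq
  have hlq : 0 < Real.log q := Real.log_pos hq
  set L : ℝ := a * Real.log q with hLdef
  have hL : 0 < L := mul_pos ha hlq
  set v : ℝ := b / (2*a) with hvdef
  have ha' : a ≠ 0 := ne_of_gt ha
  have hfg : ∀ z w : ℝ, (-a*z^2+b*z+c) = (-a*w^2+b*w+c) - a*((z-v)^2 - (w-v)^2) := by
    intro z w
    rw [hvdef]
    field_simp
    ring
  have hsum0 : Summable fun n : ℤ => Real.exp (-L*(n:ℝ)^2) :=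
    (summable_gauss_shift L hL 0).congr fun n => by norm_num
  have hmax' : ∀ z, t ≤ z → z ≤ u → (y-v)^2 ≤ (z-v)^2 := by
    intro z h1 h2
    have h3 := hmax z ⟨h1, h2⟩
    have h4 := hfg z y
    nlinarith
  have hC : Cfun (q ^ a) = ∑' n : ℤ, Real.exp (-L * (n:ℝ)^2) := by
    unfold Cfun
    refine tsum_congr fun n => ?_
    rw [Real.rpow_def_of_pos (Real.rpow_pos_of_pos q0 a), Real.log_rpow q0]
    congr 1
    rw [hLdef]; ring
  have hq_term : ∀ z : ℝ, q ^ (-a*z^2+b*z+c)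
      = q ^ (-a*y^2+b*y+c) * Real.exp (-L * ((z-v)^2 - (y-v)^2)) := by
    intro z
    rw [Real.rpow_def_of_pos q0, Real.rpow_def_of_pos q0, ← Real.exp_add]
    congr 1
    rw [hfg z y, hLdef]
    ring
  have KEY : ∑ r ∈ Finset.Icc ⌈t⌉ ⌊u⌋, Real.exp (-L*(((r:ℝ)-v)^2 - (y-v)^2))
      ≤ ∑' n : ℤ, Real.exp (-L*(n:ℝ)^2) := by
    have hmem : ∀ r ∈ Finset.Icc ⌈t⌉ ⌊u⌋, t ≤ (r:ℝ) ∧ (r:ℝ) ≤ u := by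
      intro r hr
      rw [Finset.mem_Icc] at hr
      constructor
      · exact le_trans (Int.le_ceil t) (by exact_mod_cast hr.1)
      · exact le_trans (by exact_mod_cast hr.2) (Int.floor_le u)
    rcases le_or_gt v t with hvt | htv
    rcases eq_or_lt_of_le hvt with hvt' | hvt'
    -- case v = t : interior (t ≤ v ≤ u)
    · have hyv : y = v := by
        have h0 : (y-v)^2 ≤ (v-v)^2 := hmax' v (le_of_eq hvt'.symm) (hvt' ▸ htu)
        have h1 : (y-v)^2 = 0 := le_antisymm (by simpa using h0) (sq_nonneg _)
        have := pow_eq_zero_iff (n := 2) (by norm_num) |>.mp h1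
        linarith [sub_eq_zero.mp this]
      calc ∑ r ∈ Finset.Icc ⌈t⌉ ⌊u⌋, Real.exp (-L*(((r:ℝ)-v)^2 - (y-v)^2))
          = ∑ r ∈ Finset.Icc ⌈t⌉ ⌊u⌋, Real.exp (-L*(((r:ℝ)-v)^2)) := by
            refine Finset.sum_congr rfl fun r _ => ?_
            rw [hyv]; norm_num
        _ ≤ ∑' n : ℤ, Real.exp (-L*(((n:ℝ)-v)^2)) :=
            Summable.sum_le_tsum _ (fun _ _ => Real.exp_nonneg _) (summable_gauss_shift L hL v)
        _ ≤ ∑' n : ℤ, Real.exp (-L*(n:ℝ)^2) := theta_shift_le L hL v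
    -- case v < t : boundary left
    · have hty : (y-v)^2 ≤ (t-v)^2 := hmax' t le_rfl htu
      have step : ∀ r ∈ Finset.Icc ⌈t⌉ ⌊u⌋,
          Real.exp (-L*(((r:ℝ)-v)^2 - (y-v)^2)) ≤ Real.exp (-L*(((r - ⌈t⌉ : ℤ):ℝ))^2) := by
        intro r hr
        have h1 : ((⌈t⌉:ℝ)) ≤ (r:ℝ) := by
          rw [Finset.mem_Icc] at hr; exact_mod_cast hr.1
        have h2 : t ≤ (⌈t⌉:ℝ) := Int.le_ceil t
        have e1 : (0:ℝ) ≤ ((r:ℝ) - (⌈t⌉:ℝ)) := by linarith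
        have e2 : (0:ℝ) ≤ ((⌈t⌉:ℝ) - v) := by linarith
        have e3 : (0:ℝ) ≤ ((⌈t⌉:ℝ) - t) * ((⌈t⌉:ℝ) + t - 2*v) := by
          apply mul_nonneg <;> linarith
        have hkey : (((r:ℝ) - (⌈t⌉:ℝ)))^2 ≤ ((r:ℝ)-v)^2 - (y-v)^2 := by
          nlinarith [mul_nonneg e1 e2, e3, hty]
        rw [Real.exp_le_exp]
        push_cast
        nlinarith [mul_le_mul_of_nonneg_left hkey hL.le]
      calc ∑ r ∈ Finset.Icc ⌈t⌉ ⌊u⌋, Real.exp (-L*(((r:ℝ)-v)^2 - (y-v)^2))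
          ≤ ∑ r ∈ Finset.Icc ⌈t⌉ ⌊u⌋, Real.exp (-L*(((r - ⌈t⌉ : ℤ):ℝ))^2) :=
            Finset.sum_le_sum step
        _ = ∑ m ∈ (Finset.Icc ⌈t⌉ ⌊u⌋).image (fun r => r - ⌈t⌉),
              Real.exp (-L*((m:ℝ))^2) := by
            rw [Finset.sum_image (fun x _ y _ h => by omega)]
        _ ≤ ∑' n : ℤ, Real.exp (-L*(n:ℝ)^2) :=
            Summable.sum_le_tsum _ (fun _ _ => Real.exp_nonneg _) hsum0
    -- v > t ; split on v ≤ u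
    rcases le_or_gt v u with hvu | hvu
    -- interior
    · have hyv : y = v := by
        have h0 : (y-v)^2 ≤ (v-v)^2 := hmax' v (le_of_lt htv) hvu
        have h1 : (y-v)^2 = 0 := le_antisymm (by simpa using h0) (sq_nonneg _)
        have := pow_eq_zero_iff (n := 2) (by norm_num) |>.mp h1
        linarith [sub_eq_zero.mp this]
      calc ∑ r ∈ Finset.Icc ⌈t⌉ ⌊u⌋, Real.exp (-L*(((r:ℝ)-v)^2 - (y-v)^2))
          = ∑ r ∈ Finset.Icc ⌈t⌉ ⌊u⌋, Real.exp (-L*(((r:ℝ)-v)^2)) := by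
            refine Finset.sum_congr rfl fun r _ => ?_
            rw [hyv]; norm_num
        _ ≤ ∑' n : ℤ, Real.exp (-L*(((n:ℝ)-v)^2)) :=
            Summable.sum_le_tsum _ (fun _ _ => Real.exp_nonneg _) (summable_gauss_shift L hL v)
        _ ≤ ∑' n : ℤ, Real.exp (-L*(n:ℝ)^2) := theta_shift_le L hL v
    -- boundary right : u < v
    · have huy : (y-v)^2 ≤ (u-v)^2 := hmax' u htu le_rfl
      have step : ∀ r ∈ Finset.Icc ⌈t⌉ ⌊u⌋,
          Real.exp (-L*(((r:ℝ)-v)^2 - (y-v)^2)) ≤ Real.exp (-L*(((r - ⌊u⌋ : ℤ):ℝ))^2) := by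
        intro r hr
        have h1 : (r:ℝ) ≤ ((⌊u⌋:ℝ)) := by
          rw [Finset.mem_Icc] at hr; exact_mod_cast hr.2
        have h2 : ((⌊u⌋:ℝ)) ≤ u := Int.floor_le u
        have e1 : (0:ℝ) ≤ ((⌊u⌋:ℝ) - (r:ℝ)) := by linarith
        have e2 : (0:ℝ) ≤ (v - (⌊u⌋:ℝ)) := by linarith
        have e3 : (0:ℝ) ≤ (u - (⌊u⌋:ℝ)) * (2*v - u - (⌊u⌋:ℝ)) := by
          apply mul_nonneg <;> linarith
        have hkey : (((r:ℝ) - (⌊u⌋:ℝ)))^2 ≤ ((r:ℝ)-v)^2 - (y-v)^2 := by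
          nlinarith [mul_nonneg e1 e2, e3, huy]
        rw [Real.exp_le_exp]
        push_cast
        nlinarith [mul_le_mul_of_nonneg_left hkey hL.le]
      calc ∑ r ∈ Finset.Icc ⌈t⌉ ⌊u⌋, Real.exp (-L*(((r:ℝ)-v)^2 - (y-v)^2))
          ≤ ∑ r ∈ Finset.Icc ⌈t⌉ ⌊u⌋, Real.exp (-L*(((r - ⌊u⌋ : ℤ):ℝ))^2) :=
            Finset.sum_le_sum step
        _ = ∑ m ∈ (Finset.Icc ⌈t⌉ ⌊u⌋).image (fun r => r - ⌊u⌋),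
              Real.exp (-L*((m:ℝ))^2) := by
            rw [Finset.sum_image (fun x _ y _ h => by omega)]
        _ ≤ ∑' n : ℤ, Real.exp (-L*(n:ℝ)^2) :=
            Summable.sum_le_tsum _ (fun _ _ => Real.exp_nonneg _) hsum0
  calc ∑ r ∈ Finset.Icc ⌈t⌉ ⌊u⌋, q ^ (-a * (r:ℝ)^2 + b * (r:ℝ) + c)
      = q ^ (-a*y^2+b*y+c) * ∑ r ∈ Finset.Icc ⌈t⌉ ⌊u⌋,
          Real.exp (-L*(((r:ℝ)-v)^2 - (y-v)^2)) := by
        rw [Finset.mul_sum]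
        exact Finset.sum_congr rfl fun r _ => hq_term (r:ℝ)
    _ ≤ q ^ (-a*y^2+b*y+c) * ∑' n : ℤ, Real.exp (-L*(n:ℝ)^2) :=
        mul_le_mul_of_nonneg_left KEY (Real.rpow_nonneg (le_of_lt q0) _)
    _ = Cfun (q ^ a) * q ^ (-a*y^2+b*y+c) := by rw [hC]; ring
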